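/- arXiv:1810.00263 — 2 statements merged into one kernel-verified Lean document; each statement's English description precedes it below -/
import Mathlib

section
/- For z > 0, the integral ∫_0^∞ e^{-y²} sin(yz)/y dy equals (π/2) erf(z/2). -/
noncomputable def erf (x : ℝ) : ℝ :=
  (2 / Real.sqrt Real.pi) * ∫ t in (0:ℝ)..x, Real.exp (-t ^ 2)

open MeasureTheory Real Set

lemma gauss_cos_real (t : ℝ) :
    ∫ x : ℝ, Real.exp (-x ^ 2) * Real.cos (x * t) = Real.sqrt π * Real.exp (-t ^ 2 / 4) := by
  have h := fourierIntegral_gaussian (b := 1) (by norm_num) (t : ℂ)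
  have hint : Integrable (fun x : ℝ =>
      Complex.exp (Complex.I * t * x) * Complex.exp (-1 * (x : ℂ) ^ 2)) :=
    (integrable_cexp_quadratic (b := 1) (by norm_num) (Complex.I * t) 0).congr
      (Filter.Eventually.of_forall fun x =>
        show Complex.exp (-1 * (x : ℂ) ^ 2 + Complex.I * t * x + 0)
            = Complex.exp (Complex.I * t * x) * Complex.exp (-1 * (x : ℂ) ^ 2) by
          rw [← Complex.exp_add]; congr 1; ring)
  have key : ∀ x : ℝ, (Complex.exp (Complex.I * t * x) * Complex.exp (-1 * (x : ℂ) ^ 2)).re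
      = Real.exp (-x ^ 2) * Real.cos (x * t) := by
    intro x
    rw [← Complex.exp_add,
      show Complex.I * t * x + -1 * (x : ℂ) ^ 2 = ↑(-x ^ 2) + ↑(x * t) * Complex.I by
        push_cast; ring,
      Complex.exp_re]
    simp [← Complex.ofReal_pow]
  calc ∫ x : ℝ, Real.exp (-x ^ 2) * Real.cos (x * t)
      = ∫ x : ℝ, (Complex.exp (Complex.I * t * x) * Complex.exp (-1 * (x : ℂ) ^ 2)).re := by
        simp_rw [key]
    _ = (∫ x : ℝ, Complex.exp (Complex.I * t * x) * Complex.exp (-1 * (x : ℂ) ^ 2)).re :=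
        integral_re hint
    _ = (((π : ℂ) / 1) ^ (1 / 2 : ℂ) * Complex.exp (-(t : ℂ) ^ 2 / (4 * 1))).re := by rw [h]
    _ = Real.sqrt π * Real.exp (-t ^ 2 / 4) := by
        rw [div_one, show (1 / 2 : ℂ) = ((1 / 2 : ℝ) : ℂ) by norm_num,
          ← Complex.ofReal_cpow pi_pos.le, ← Real.sqrt_eq_rpow,
          show -(t : ℂ) ^ 2 / (4 * 1) = ((-t ^ 2 / 4 : ℝ) : ℂ) by push_cast; ring,
          ← Complex.ofReal_exp, ← Complex.ofReal_mul, Complex.ofReal_re]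

lemma gauss_cos_Ioi (t : ℝ) :
    ∫ y in Ioi (0 : ℝ), Real.exp (-y ^ 2) * Real.cos (y * t)
      = Real.sqrt π / 2 * Real.exp (-t ^ 2 / 4) := by
  have habs := _root_.integral_comp_abs
    (f := fun x : ℝ => Real.exp (-x ^ 2) * Real.cos (x * t))
  have heq : ∀ x : ℝ, Real.exp (-|x| ^ 2) * Real.cos (|x| * t)
      = Real.exp (-x ^ 2) * Real.cos (x * t) := by
    intro x
    rcases abs_choice x with h | h <;> rw [h]
    rw [neg_mul, Real.cos_neg, neg_sq]
  simp_rw [heq] at habs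
  have h2 := gauss_cos_real t
  rw [habs] at h2
  linarith

lemma integrable_gauss_Ioi : Integrable (fun y : ℝ => Real.exp (-y ^ 2))
    (MeasureTheory.volume.restrict (Ioi 0)) := by
  have := integrable_exp_neg_mul_sq (b := 1) one_pos
  simpa using this.restrict

lemma hasDeriv_F (z : ℝ) :
    HasDerivAt (fun z => ∫ y in Ioi (0 : ℝ), Real.exp (-y ^ 2) * Real.sin (y * z) / y)
      (Real.sqrt π / 2 * Real.exp (-z ^ 2 / 4)) z := by
  have hmeas : ∀ x : ℝ, AEStronglyMeasurable
      (fun y : ℝ => Real.exp (-y ^ 2) * Real.sin (y * x) / y)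
      (MeasureTheory.volume.restrict (Ioi 0)) := by
    intro x
    apply ContinuousOn.aestronglyMeasurable _ measurableSet_Ioi
    exact ContinuousOn.div (by fun_prop) continuousOn_id fun y hy => ne_of_gt hy
  have hbound : ∀ x : ℝ, ∀ y ∈ Ioi (0 : ℝ),
      ‖Real.exp (-y ^ 2) * Real.sin (y * x) / y‖ ≤ |x| * Real.exp (-y ^ 2) := by
    intro x y hy
    rw [mem_Ioi] at hy
    rw [Real.norm_eq_abs, abs_div, abs_of_pos hy, abs_mul,
      abs_of_pos (Real.exp_pos _), div_le_iff₀ hy]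
    calc Real.exp (-y ^ 2) * |Real.sin (y * x)| ≤ Real.exp (-y ^ 2) * |y * x| :=
          mul_le_mul_of_nonneg_left (Real.abs_sin_le_abs) (Real.exp_pos _).le
      _ = |x| * Real.exp (-y ^ 2) * y := by
          rw [abs_mul, abs_of_pos hy]; ring
  have hF_int : Integrable (fun y : ℝ => Real.exp (-y ^ 2) * Real.sin (y * z) / y)
      (MeasureTheory.volume.restrict (Ioi 0)) := by
    refine (integrable_gauss_Ioi.const_mul |z|).mono' (hmeas z) ?_
    rw [MeasureTheory.ae_restrict_iff' measurableSet_Ioi]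
    exact Filter.Eventually.of_forall (hbound z)
  have := hasDerivAt_integral_of_dominated_loc_of_deriv_le
    (F := fun x (y : ℝ) => Real.exp (-y ^ 2) * Real.sin (y * x) / y)
    (F' := fun x (y : ℝ) => Real.exp (-y ^ 2) * Real.cos (y * x))
    (x₀ := z) (bound := fun y => Real.exp (-y ^ 2)) (s := Metric.ball z 1) (Metric.ball_mem_nhds z one_pos)
    (Filter.Eventually.of_forall hmeas) hF_int
    (Continuous.aestronglyMeasurable (by fun_prop))
    ?_ integrable_gauss_Ioi ?_
  · rw [gauss_cos_Ioi] at this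
    exact this.2
  · rw [MeasureTheory.ae_restrict_iff' measurableSet_Ioi]
    refine Filter.Eventually.of_forall fun y hy x _ => ?_
    rw [Real.norm_eq_abs, abs_mul, abs_of_pos (Real.exp_pos _)]
    exact mul_le_of_le_one_right (Real.exp_pos _).le (Real.abs_cos_le_one _)
  · rw [MeasureTheory.ae_restrict_iff' measurableSet_Ioi]
    refine Filter.Eventually.of_forall fun y hy x _ => ?_
    rw [mem_Ioi] at hy
    have h1 : HasDerivAt (fun x : ℝ => y * x) y x := by
      simpa using (hasDerivAt_id x).const_mul y
    have h2 : HasDerivAt (fun x : ℝ => Real.sin (y * x)) (Real.cos (y * x) * y) x :=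
      (Real.hasDerivAt_sin (y * x)).comp x h1
    have h3 := (h2.const_mul (Real.exp (-y ^ 2))).div_const y
    refine h3.congr_deriv ?_
    rw [mul_div_assoc, mul_div_cancel_right₀ _ hy.ne']

theorem integral_exp_sq_sin_div' (z : ℝ) (hz : 0 < z) :
    ∫ y in Set.Ioi (0:ℝ), Real.exp (-y ^ 2) * Real.sin (y * z) / y =
      (Real.pi / 2) * ((2 / Real.sqrt Real.pi) * ∫ t in (0:ℝ)..(z/2), Real.exp (-t ^ 2)) := by
  have hFTC := intervalIntegral.integral_eq_sub_of_hasDerivAt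
    (f := fun z => ∫ y in Ioi (0 : ℝ), Real.exp (-y ^ 2) * Real.sin (y * z) / y)
    (f' := fun z => Real.sqrt π / 2 * Real.exp (-z ^ 2 / 4)) (a := 0) (b := z)
    (fun t _ => hasDeriv_F t)
    (Continuous.intervalIntegrable (by fun_prop) 0 z)
  have hF0 : (∫ y in Ioi (0 : ℝ), Real.exp (-y ^ 2) * Real.sin (y * 0) / y) = 0 := by
    simp
  beta_reduce at hFTC
  rw [hF0, sub_zero] at hFTC
  rw [← hFTC]
  have hsub : ∫ t in (0:ℝ)..z, Real.sqrt π / 2 * Real.exp (-t ^ 2 / 4)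
      = 2 * ∫ t in (0:ℝ)..(z/2), Real.sqrt π / 2 * Real.exp (-t ^ 2) := by
    have := intervalIntegral.integral_comp_div (a := (0:ℝ)) (b := z)
      (c := 2) (f := fun t => Real.sqrt π / 2 * Real.exp (-t ^ 2)) two_ne_zero
    simp only [zero_div, smul_eq_mul] at this
    rw [← this]
    congr 1
    ext t
    ring_nf
  rw [hsub, intervalIntegral.integral_const_mul]
  have hπ : Real.sqrt π * Real.sqrt π = π := Real.mul_self_sqrt pi_pos.le
  have hs : Real.sqrt π ≠ 0 := ne_of_gt (Real.sqrt_pos.mpr pi_pos)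
  set J := ∫ t in (0:ℝ)..(z/2), Real.exp (-t ^ 2) with hJ
  field_simp
  linear_combination J * hπ


/-- `∫_0^∞ e^{-y²} sin(yz)/y dy = (π/2) erf(z/2)` for `z > 0`. -/
theorem integral_exp_sq_sin_div (z : ℝ) (hz : 0 < z) :
    ∫ y in Set.Ioi (0:ℝ), Real.exp (-y ^ 2) * Real.sin (y * z) / y =
      (Real.pi / 2) * erf (z / 2) := by
  rw [erf]
  exact integral_exp_sq_sin_div' z hz
end

section
/- For a < 0 and z > 0, the kernel K(a,z,r) = e^{-cos(πa) z r^{-a} - r} sin(sin(πa) z r^{-a})/r is integrable on (0,∞), i.e., ∫_0^∞ |K(a,z,r)| dr < ∞. -/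
open MeasureTheory

/-- For `-1 < a < 0` and `z > 0`, the kernel
`K(a,z,r) = e^{-cos(πa) z r^{-a} - r} sin(sin(πa) z r^{-a}) / r`
is (absolutely) integrable on `(0,∞)`. -/
theorem kernel_integrable (a z : ℝ) (ha₁ : -1 < a) (ha₂ : a < 0) (hz : 0 < z) :
    IntegrableOn
      (fun r : ℝ =>
        Real.exp (-(Real.cos (Real.pi * a)) * z * r ^ (-a) - r) *
          Real.sin (Real.sin (Real.pi * a) * z * r ^ (-a)) / r)
      (Set.Ioi 0) := by
  set f : ℝ → ℝ := fun r =>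
    Real.exp (-(Real.cos (Real.pi * a)) * z * r ^ (-a) - r) *
      Real.sin (Real.sin (Real.pi * a) * z * r ^ (-a)) / r with hf
  have hna : 0 < -a := by linarith
  -- continuity on (0,∞)
  have hcont : ContinuousOn f (Set.Ioi (0:ℝ)) := by
    have hrpow : ContinuousOn (fun r : ℝ => r ^ (-a)) (Set.Ioi 0) :=
      ContinuousOn.rpow_const continuousOn_id (fun x hx => Or.inl (ne_of_gt hx))
    apply ContinuousOn.div
    · exact (Real.continuous_exp.comp_continuousOn
        (((continuousOn_const.mul hrpow)).sub continuousOn_id)).mul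
        (Real.continuous_sin.comp_continuousOn (continuousOn_const.mul hrpow))
    · exact continuousOn_id
    · exact fun x hx => ne_of_gt hx
  set C : ℝ := |Real.cos (Real.pi * a)| * z with hC
  have hC0 : 0 ≤ C := mul_nonneg (abs_nonneg _) hz.le
  -- the exponent bound
  have hexp_le : ∀ r : ℝ, 0 < r →
      -(Real.cos (Real.pi * a)) * z * r ^ (-a) - r ≤ C * r ^ (-a) - r := by
    intro r hr
    have h2 : -(Real.cos (Real.pi * a)) * z * r ^ (-a) ≤ C * r ^ (-a) := by
      have := neg_le_abs (Real.cos (Real.pi * a))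
      have hpos : 0 ≤ z * r ^ (-a) := mul_nonneg hz.le (Real.rpow_nonneg hr.le _)
      calc -(Real.cos (Real.pi * a)) * z * r ^ (-a)
          = -(Real.cos (Real.pi * a)) * (z * r ^ (-a)) := by ring
        _ ≤ |Real.cos (Real.pi * a)| * (z * r ^ (-a)) := mul_le_mul_of_nonneg_right this hpos
        _ = C * r ^ (-a) := by ring
    linarith
  -- Part 1 : integrable on Ioc 0 1
  have h1 : IntegrableOn f (Set.Ioc (0:ℝ) 1) := by
    have hg : IntegrableOn (fun r : ℝ => (Real.exp C * z) * r ^ (-a - 1))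
        (Set.Ioc (0:ℝ) 1) := by
      have := intervalIntegral.intervalIntegrable_rpow' (r := -a - 1) (by linarith) (a := 0) (b := 1)
      have h' := (intervalIntegrable_iff_integrableOn_Ioc_of_le (by norm_num : (0:ℝ) ≤ 1)).mp this
      exact h'.const_mul _
    refine hg.integrable.mono' ?_ ?_
    · exact (hcont.mono (Set.Ioc_subset_Ioi_self)).aestronglyMeasurable measurableSet_Ioc
    · rw [ae_restrict_iff' measurableSet_Ioc]
      filter_upwards with r hr
      obtain ⟨hr0, hr1⟩ := hr
      have hrp : (0:ℝ) < r ^ (-a) := Real.rpow_pos_of_pos hr0 _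
      have hrle : r ^ (-a) ≤ 1 := Real.rpow_le_one hr0.le hr1 hna.le
      have hEle : -(Real.cos (Real.pi * a)) * z * r ^ (-a) - r ≤ C := by
        have := hexp_le r hr0
        have : C * r ^ (-a) ≤ C * 1 := mul_le_mul_of_nonneg_left hrle hC0
        nlinarith [neg_le_abs (Real.cos (Real.pi * a)), Real.rpow_nonneg hr0.le (-a)]
      have hsin : |Real.sin (Real.sin (Real.pi * a) * z * r ^ (-a))|
          ≤ z * r ^ (-a) := by
        refine (Real.abs_sin_le_abs).trans ?_
        rw [abs_mul, abs_mul]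
        have h1 : |Real.sin (Real.pi * a)| ≤ 1 := Real.abs_sin_le_one _
        have h2 : |z| = z := abs_of_pos hz
        have h3 : |r ^ (-a)| = r ^ (-a) := abs_of_pos hrp
        rw [h2, h3]
        calc |Real.sin (Real.pi * a)| * z * r ^ (-a)
            ≤ 1 * z * r ^ (-a) :=
              mul_le_mul_of_nonneg_right (mul_le_mul_of_nonneg_right h1 hz.le) hrp.le
          _ = z * r ^ (-a) := by ring
      have : ‖f r‖ ≤ Real.exp C * (z * r ^ (-a)) / r := by
        rw [hf]
        simp only [norm_div, norm_mul, Real.norm_eq_abs]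
        rw [abs_of_pos hr0, Real.abs_exp]
        apply div_le_div_of_nonneg_right _ hr0.le
        exact mul_le_mul (Real.exp_le_exp.mpr hEle) hsin (abs_nonneg _)
          (Real.exp_pos _).le
      refine this.trans (le_of_eq ?_)
      rw [Real.rpow_sub hr0, Real.rpow_one]
      field_simp
    -- done part 1
  -- Part 2 : integrable on Ioi 1
  have h2 : IntegrableOn f (Set.Ioi (1:ℝ)) := by
    refine integrable_of_isBigO_exp_neg (b := 1/2) (by norm_num)
      (hcont.mono (fun x hx => Set.mem_Ioi.mpr (lt_of_lt_of_le one_pos hx))) ?_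
    rw [Asymptotics.isBigO_iff]
    refine ⟨1, ?_⟩
    have htend : Filter.Tendsto (fun r : ℝ => C * r ^ (-(a+1))) Filter.atTop (nhds 0) := by
      have := tendsto_rpow_neg_atTop (y := a + 1) (by linarith)
      simpa using this.const_mul C
    have hev : ∀ᶠ r : ℝ in Filter.atTop, C * r ^ (-(a+1)) < 1/2 :=
      htend.eventually_lt_const (by norm_num)
    filter_upwards [hev, Filter.eventually_ge_atTop (1:ℝ)] with r hr h1r
    have hr0 : (0:ℝ) < r := lt_of_lt_of_le one_pos h1r
    have hCr : C * r ^ (-a) ≤ r / 2 := by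
      have h' : C * r ^ (-(a+1)) * r ≤ (1/2) * r :=
        mul_le_mul_of_nonneg_right hr.le hr0.le
      have heq : r ^ (-(a+1)) * r = r ^ (-a) := by
        rw [← Real.rpow_add_one hr0.ne']
        congr 1
        ring
      calc C * r ^ (-a) = C * r ^ (-(a+1)) * r := by rw [← heq]; ring
        _ ≤ (1/2) * r := h'
        _ = r / 2 := by ring
    have hEle : -(Real.cos (Real.pi * a)) * z * r ^ (-a) - r ≤ -(1/2) * r := by
      have := hexp_le r hr0
      linarith
    have : ‖f r‖ ≤ Real.exp (-(1/2) * r) := by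
      rw [hf]
      simp only [norm_div, norm_mul, Real.norm_eq_abs]
      rw [abs_of_pos hr0, Real.abs_exp]
      rw [div_le_iff₀ hr0]
      calc Real.exp (-(Real.cos (Real.pi * a)) * z * r ^ (-a) - r) *
            |Real.sin (Real.sin (Real.pi * a) * z * r ^ (-a))|
          ≤ Real.exp (-(1/2) * r) * 1 :=
            mul_le_mul (Real.exp_le_exp.mpr hEle) (Real.abs_sin_le_one _)
              (abs_nonneg _) (Real.exp_pos _).le
        _ = Real.exp (-(1/2) * r) := mul_one _
        _ ≤ Real.exp (-(1/2) * r) * r := le_mul_of_one_le_right (Real.exp_pos _).le h1r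
    simpa [Real.norm_eq_abs, Real.abs_exp] using this
  have hunion : Set.Ioc (0:ℝ) 1 ∪ Set.Ioi 1 = Set.Ioi 0 := Set.Ioc_union_Ioi_eq_Ioi zero_le_one
  rw [← hunion]
  exact h1.union h2
end
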